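/- Let p be a prime and G a locally finite p-group (every finitely generated subgroup of G is a finite p-group) such that the abelianization G/G' is finite. If G is residually finite, then G is finite. -/

import Mathlib

open Pointwise
open scoped commutatorElement

/-- In a finite `p`-group, a subgroup that together with the commutator subgroup
generates the whole group must be the whole group. -/
lemma aux_pgroup_gen_top {p : ℕ} (hp : p.Prime) {Q : Type*} [Group Q] [Finite Q]
    (hQ : IsPGroup p Q) (K : Subgroup Q) (h : K ⊔ commutator Q = ⊤) : K = ⊤ := by
  by_contra hK
  haveI : Fact p.Prime := ⟨hp⟩
  haveI : Group.IsNilpotent Q := hQ.isNilpotent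
  haveI : Finite (Subgroup Q) :=
    Finite.of_injective (fun H : Subgroup Q => (H : Set Q)) (fun _ _ => by simp)
  obtain ⟨M, hM, hKM⟩ := (eq_top_or_exists_le_coatom K).resolve_left hK
  haveI : M.Normal := Subgroup.NormalizerCondition.normal_of_coatom M normalizerCondition_of_isNilpotent hM
  -- every subgroup of `Q ⧸ M` is `⊥` or `⊤`
  have hsub : ∀ T : Subgroup (Q ⧸ M), T = ⊥ ∨ T = ⊤ := by
    intro T
    have hMle : M ≤ Subgroup.comap (QuotientGroup.mk' M) T := by
      intro x hx
      have : ((x : Q ⧸ M)) = 1 := (QuotientGroup.eq_one_iff x).2 hx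
      simp only [Subgroup.mem_comap, QuotientGroup.mk'_apply, this]
      exact one_mem T
    have hmap : Subgroup.map (QuotientGroup.mk' M) (Subgroup.comap (QuotientGroup.mk' M) T) = T :=
      Subgroup.map_comap_eq_self_of_surjective (QuotientGroup.mk'_surjective M) T
    rcases lt_or_eq_of_le hMle with hlt | heq
    · right
      have : Subgroup.comap (QuotientGroup.mk' M) T = ⊤ := hM.2 _ hlt
      rw [← hmap, this, Subgroup.map_top_of_surjective _ (QuotientGroup.mk'_surjective M)]
    · left
      rw [← hmap, ← heq]
      apply (Subgroup.map_eq_bot_iff _).2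
      intro x hx
      simpa [QuotientGroup.ker_mk'] using hx
  -- `Q ⧸ M` is cyclic, hence abelian
  obtain ⟨x, hx⟩ : ∃ x : Q, x ∉ M := by
    by_contra hc
    push_neg at hc
    exact hM.1 (Subgroup.eq_top_iff' M |>.2 hc)
  have hx1 : (x : Q ⧸ M) ≠ 1 := fun hh => hx ((QuotientGroup.eq_one_iff x).1 hh)
  have hcyc : IsCyclic (Q ⧸ M) := by
    refine ⟨(x : Q ⧸ M), ?_⟩
    have := (hsub (Subgroup.zpowers (x : Q ⧸ M))).resolve_left ?_
    · intro a
      have ha : a ∈ Subgroup.zpowers (x : Q ⧸ M) := by rw [this]; trivial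
      exact ha
    · intro hb
      exact hx1 (by simpa [hb] using Subgroup.mem_zpowers (x : Q ⧸ M))
  have hcomm : commutator Q ≤ M := by
    rw [commutator, Subgroup.commutator_le]
    intro g1 _ g2 _
    letI := hcyc.commGroup
    have : ((⁅g1, g2⁆ : Q) : Q ⧸ M) = 1 := by
      have : ((⁅g1, g2⁆ : Q) : Q ⧸ M) = ⁅(g1 : Q ⧸ M), (g2 : Q ⧸ M)⁆ := rfl
      rw [this, commutatorElement_def, mul_comm (g1 : Q ⧸ M) (g2 : Q ⧸ M)]
      group
    exact (QuotientGroup.eq_one_iff _).1 this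
  exact hM.1 (top_le_iff.1 (h ▸ sup_le hKM hcomm))

/-- Let `p` be a prime and `G` a locally finite `p`-group (every finitely
generated subgroup is a finite `p`-group) whose abelianization `G/G'` is finite.
If `G` is residually finite, then `G` is finite. -/
theorem stmt_4 {G : Type*} [Group G] (p : ℕ) (hp : p.Prime)
    (hloc : ∀ H : Subgroup G, H.FG → Finite H ∧ IsPGroup p H)
    (hab : Finite (G ⧸ commutator G))
    (hrf : ∀ g : G, g ≠ 1 → ∃ N : Subgroup G, N.Normal ∧ N.FiniteIndex ∧ g ∉ N) :
    Finite G := by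
  classical
  -- `G` is a `p`-group
  have hpG : IsPGroup p G := by
    intro g
    have hfg : (Subgroup.closure ({g} : Set G)).FG :=
      (Subgroup.fg_iff _).2 ⟨{g}, rfl, Set.finite_singleton g⟩
    obtain ⟨_, hpg⟩ := hloc _ hfg
    obtain ⟨k, hk⟩ := hpg ⟨g, Subgroup.subset_closure rfl⟩
    exact ⟨k, by simpa [Subtype.ext_iff] using hk⟩
  -- a finite set of coset representatives
  set S : Set G := Set.range (fun q : G ⧸ commutator G => q.out) with hS
  have hSfin : S.Finite := Set.finite_range _
  set H : Subgroup G := Subgroup.closure S with hHdef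
  have hHfg : H.FG := (Subgroup.fg_iff _).2 ⟨S, rfl, hSfin⟩
  -- `H` together with the commutator subgroup generates `G`
  have hsup : H ⊔ commutator G = ⊤ := by
    rw [eq_top_iff]
    intro g _
    have h1 : ((g : G ⧸ commutator G)).out ∈ H :=
      Subgroup.subset_closure ⟨(g : G ⧸ commutator G), rfl⟩
    have h2 : ((g : G ⧸ commutator G)).out⁻¹ * g ∈ commutator G := by
      rw [← QuotientGroup.eq_one_iff]
      rw [QuotientGroup.mk_mul, QuotientGroup.mk_inv, QuotientGroup.out_eq']
      group
    have : g = ((g : G ⧸ commutator G)).out * (((g : G ⧸ commutator G)).out⁻¹ * g) := by group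
    rw [this]
    exact mul_mem (Subgroup.mem_sup_left h1) (Subgroup.mem_sup_right h2)
  -- the main claim: `H = ⊤`
  have hHtop : H = ⊤ := by
    rw [eq_top_iff]
    intro g _
    -- the finite subgroup generated by `S` and `g`
    set K : Subgroup G := Subgroup.closure (insert g S) with hKdef
    have hKfg : K.FG := (Subgroup.fg_iff _).2 ⟨insert g S, rfl, hSfin.insert g⟩
    haveI hKfin : Finite K := (hloc K hKfg).1
    -- choose a finite-index normal subgroup avoiding all nontrivial elements of `K`
    have hchoice : ∀ k : {x : K // (x : G) ≠ 1},
        ∃ N : Subgroup G, N.Normal ∧ N.FiniteIndex ∧ ((k : K) : G) ∉ N :=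
      fun k => hrf _ k.2
    choose Nf hNnorm hNfi hNnot using hchoice
    by_cases hne : Nonempty {x : K // (x : G) ≠ 1}
    case neg =>
      -- `K` is trivial, so `g = 1 ∈ H`
      have : (g : G) = 1 := by
        by_contra hg1
        exact hne ⟨⟨⟨g, Subgroup.subset_closure (Set.mem_insert g S)⟩, hg1⟩⟩
      rw [this]; exact one_mem H
    set N : Subgroup G := ⨅ k, Nf k with hNdef
    haveI hNnormal : N.Normal := by
      constructor
      intro n hn x
      rw [hNdef, Subgroup.mem_iInf] at hn ⊢
      exact fun k => (hNnorm k).conj_mem n (hn k) x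
    haveI hNfin : N.FiniteIndex := Subgroup.finiteIndex_iInf hNfi
    have hKN : ∀ x : G, x ∈ K → x ∈ N → x = 1 := by
      intro x hxK hxN
      by_contra hx1
      have := Subgroup.mem_iInf.1 hxN ⟨⟨x, hxK⟩, hx1⟩
      exact hNnot ⟨⟨x, hxK⟩, hx1⟩ this
    -- pass to the finite `p`-group quotient `G ⧸ N`
    haveI : Finite (G ⧸ N) := N.finite_quotient_of_finiteIndex
    have hpQ : IsPGroup p (G ⧸ N) := hpG.to_quotient N
    have hmapcomm : Subgroup.map (QuotientGroup.mk' N) (commutator G) = commutator (G ⧸ N) := by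
      rw [commutator, commutator, Subgroup.map_commutator,
        Subgroup.map_top_of_surjective _ (QuotientGroup.mk'_surjective N)]
    have hmaptop : Subgroup.map (QuotientGroup.mk' N) H ⊔ commutator (G ⧸ N) = ⊤ := by
      rw [← hmapcomm, ← Subgroup.map_sup, hsup,
        Subgroup.map_top_of_surjective _ (QuotientGroup.mk'_surjective N)]
    have hmapH : Subgroup.map (QuotientGroup.mk' N) H = ⊤ :=
      aux_pgroup_gen_top hp hpQ _ hmaptop
    -- hence `H ⊔ N = ⊤`
    have hHN : H ⊔ N = ⊤ := by
      have := congrArg (Subgroup.comap (QuotientGroup.mk' N)) hmapH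
      rwa [Subgroup.comap_map_eq, QuotientGroup.ker_mk', Subgroup.comap_top] at this
    -- write `g = h * n` and conclude
    have hg : g ∈ ((H : Set G) * (N : Set G)) := by
      rw [← Subgroup.mul_normal H N, hHN]; trivial
    obtain ⟨h, hh, n, hn, hhn⟩ := hg
    have hhK : h ∈ K := by
      have : H ≤ K := Subgroup.closure_mono (Set.subset_insert g S)
      exact this hh
    have hgK : g ∈ K := Subgroup.subset_closure (Set.mem_insert g S)
    have hnK : n ∈ K := by
      have : n = h⁻¹ * g := by rw [← hhn]; group
      rw [this]; exact mul_mem (inv_mem hhK) hgK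
    have : n = 1 := hKN n hnK hn
    rw [← hhn, this]
    simpa using hh
  haveI : Finite H := (hloc H hHfg).1
  rw [hHtop] at this
  exact Finite.of_equiv _ Subgroup.topEquiv.toEquiv
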